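/- If there exist n unit vectors in ℝ^r with all pairwise inner products ≤ 0, then n ≤ 2r. -/

import Mathlib

open Module Submodule

lemma aux_nonpos_code (d : ℕ) :
    ∀ (E : Type) [NormedAddCommGroup E] [InnerProductSpace ℝ E]
      [FiniteDimensional ℝ E], finrank ℝ E = d →
      ∀ (n : ℕ) (v : Fin n → E), (∀ i, ‖v i‖ = 1) →
      (∀ i j, i ≠ j → (inner ℝ (v i) (v j) : ℝ) ≤ 0) → n ≤ 2 * d := by
  induction d with
  | zero =>
    intro E _ _ _ hd n v hunit hpair
    rcases Nat.eq_zero_or_pos n with h | h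
    · omega
    · exfalso
      have : Subsingleton E := finrank_zero_iff.mp hd
      have h0 := hunit ⟨0, h⟩
      rw [Subsingleton.elim (v ⟨0, h⟩) 0, norm_zero] at h0
      norm_num at h0
  | succ d ih =>
    intro E _ _ _ hd n v hunit hpair
    rcases n with _ | n
    · omega
    classical
    set u := v 0 with hu
    have hu1 : ‖u‖ = 1 := hunit 0
    have hune : u ≠ 0 := by intro h; rw [h, norm_zero] at hu1; norm_num at hu1
    have huu : (inner ℝ u u : ℝ) = 1 := by
      rw [real_inner_self_eq_norm_mul_norm, hu1]; ring
    set F := (ℝ ∙ u)ᗮ with hF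
    have hFd : finrank ℝ F = d := by
      have h1 : finrank ℝ (ℝ ∙ u) = 1 := finrank_span_singleton hune
      have := Submodule.finrank_add_finrank_orthogonal (K := ℝ ∙ u) (E := E)
      rw [hF]
      omega
    have hmem : ∀ i : Fin (n+1), v i - (inner ℝ u (v i) : ℝ) • u ∈ F := by
      intro i
      rw [hF, Submodule.mem_orthogonal_singleton_iff_inner_right]
      rw [inner_sub_right, real_inner_smul_right, huu]
      ring
    set W : Fin (n+1) → F := fun i => ⟨v i - (inner ℝ u (v i) : ℝ) • u, hmem i⟩ with hW
    have hWinner : ∀ i j, (inner ℝ (W i) (W j) : ℝ) =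
        (inner ℝ (v i) (v j) : ℝ) - (inner ℝ u (v i) : ℝ) * (inner ℝ u (v j) : ℝ) := by
      intro i j
      rw [Submodule.coe_inner]
      show (inner ℝ (v i - (inner ℝ u (v i) : ℝ) • u) (v j - (inner ℝ u (v j) : ℝ) • u) : ℝ) = _
      rw [inner_sub_left, inner_sub_right, inner_sub_right, real_inner_smul_left,
        real_inner_smul_left, real_inner_smul_right, real_inner_smul_right, huu,
        real_inner_comm (v i) u]
      ring
    set S : Finset (Fin (n+1)) := Finset.univ.filter (fun i => i ≠ 0 ∧ v i ≠ -u) with hS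
    have hWne : ∀ i ∈ S, W i ≠ 0 := by
      intro i hi
      simp only [hS, Finset.mem_filter] at hi
      obtain ⟨-, hi0, hine⟩ := hi
      intro h
      have h' : v i - (inner ℝ u (v i) : ℝ) • u = 0 := congrArg Subtype.val h
      have hiu : (inner ℝ u (v i) : ℝ) ≤ 0 := by
        rw [real_inner_comm]; exact hpair i 0 hi0
      have hvi : v i = (inner ℝ u (v i) : ℝ) • u := by
        rwa [sub_eq_zero] at h'
      have habs : |(inner ℝ u (v i) : ℝ)| = 1 := by
        have := hunit i
        rw [hvi, norm_smul, hu1, mul_one] at this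
        simpa using this
      have hneg : (inner ℝ u (v i) : ℝ) = -1 := by
        rcases (abs_eq (by norm_num : (0:ℝ) ≤ 1)).mp habs with h1 | h1
        · linarith
        · exact h1
      apply hine
      rw [hvi, hneg, neg_one_smul]
    set W' : S → F := fun i => (‖W i.1‖)⁻¹ • W i.1 with hW'
    have hW'unit : ∀ i : S, ‖W' i‖ = 1 := by
      intro i
      have hne := hWne i.1 i.2
      rw [hW', norm_smul, norm_inv, norm_norm, inv_mul_cancel₀ (norm_ne_zero_iff.mpr hne)]
    have hW'pair : ∀ i j : S, i ≠ j → (inner ℝ (W' i) (W' j) : ℝ) ≤ 0 := by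
      intro i j hij
      have hij' : i.1 ≠ j.1 := fun h => hij (Subtype.ext h)
      rw [hW']
      simp only [real_inner_smul_left, real_inner_smul_right]
      have h1 : (inner ℝ (W i.1) (W j.1) : ℝ) ≤ 0 := by
        rw [hWinner]
        have ha : (inner ℝ u (v i.1) : ℝ) ≤ 0 := by
          have hi := (Finset.mem_filter.mp i.2).2.1
          rw [real_inner_comm]; exact hpair i.1 0 hi
        have hb : (inner ℝ u (v j.1) : ℝ) ≤ 0 := by
          have hj := (Finset.mem_filter.mp j.2).2.1
          rw [real_inner_comm]; exact hpair j.1 0 hj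
        have := hpair i.1 j.1 hij'
        nlinarith
      have h2 : (0:ℝ) ≤ ‖W i.1‖⁻¹ := by positivity
      have h3 : (0:ℝ) ≤ ‖W j.1‖⁻¹ := by positivity
      exact mul_nonpos_of_nonneg_of_nonpos h3 (mul_nonpos_of_nonneg_of_nonpos h2 h1)
    have hcard : S.card ≤ 2 * d := by
      have e := S.equivFin
      exact ih F hFd S.card (fun k => W' (e.symm k)) (fun k => hW'unit _)
        (fun k l hkl => hW'pair _ _ (fun h => hkl (e.symm.injective h)))
    -- complement has at most 2 elements
    set T : Finset (Fin (n+1)) := Finset.univ.filter (fun i => v i = -u) with hT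
    have hTcard : T.card ≤ 1 := by
      apply Finset.card_le_one.mpr
      intro a ha b hb
      simp only [hT, Finset.mem_filter] at ha hb
      by_contra hab
      have := hpair a b hab
      rw [ha.2, hb.2, inner_neg_neg, huu] at this
      linarith
    have hScomp : (Finset.univ.filter (fun i : Fin (n+1) => ¬(i ≠ 0 ∧ v i ≠ -u))).card ≤ 2 := by
      have hsub : Finset.univ.filter (fun i : Fin (n+1) => ¬(i ≠ 0 ∧ v i ≠ -u)) ⊆ {0} ∪ T := by
        intro i hi
        simp only [Finset.mem_filter, not_and_or, not_ne_iff, not_not] at hi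
        simp only [Finset.mem_union, Finset.mem_singleton, hT, Finset.mem_filter,
          Finset.mem_univ, true_and]
        tauto
      calc (Finset.univ.filter (fun i : Fin (n+1) => ¬(i ≠ 0 ∧ v i ≠ -u))).card
          ≤ ({0} ∪ T).card := Finset.card_le_card hsub
        _ ≤ ({0} : Finset (Fin (n+1))).card + T.card := Finset.card_union_le _ _
        _ ≤ 1 + 1 := Nat.add_le_add (by simp) hTcard
        _ = 2 := rfl
    have hsplit := Finset.card_filter_add_card_filter_not
      (s := (Finset.univ : Finset (Fin (n+1)))) (p := fun i => i ≠ 0 ∧ v i ≠ -u)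
    simp only [Finset.card_univ, Fintype.card_fin] at hsplit
    rw [hS] at hcard
    omega

theorem nonpos_code_le_two_dim (n r : ℕ)
    (v : Fin n → EuclideanSpace ℝ (Fin r))
    (hunit : ∀ i, ‖v i‖ = 1)
    (hpair : ∀ i j, i ≠ j → (inner ℝ (v i) (v j) : ℝ) ≤ 0) :
    n ≤ 2 * r := by
  exact aux_nonpos_code r _ (by simp) n v hunit hpair
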